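/- Objective rewriting for the integral witness optimization: for finite sets A, B, C, relation R_1 ⊆ A × B with every a ∈ A incident to some b, and an assignment C_b ⊆ C for each b ∈ B satisfying ⋃_{b : (a,b) ∈ R_1} C_b = C for all a ∈ A, one has ∑_{b ∈ B} |C_b| = ∑_{c ∈ C} |{b ∈ B : c ∈ C_b}|, and the minimum of ∑_{b ∈ B} |C_b| over all feasible assignments equals |C| · x*, where x* = min{ |B'| : B' ⊆ B, ∀a ∈ A ∃b ∈ B', (a,b) ∈ R_1 }. -/
import Mathlib


open Set Classical

attribute [local instance] Classical.propDecidable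

/-- The covering number `x*`: the minimum size of `B' ⊆ B` such that every
`a ∈ A` is adjacent via `R₁` to some `b ∈ B'`. -/
noncomputable def coverNum {α β : Type} (R1 : Set (α × β)) : ℕ :=
  sInf {n | ∃ B' : Finset β, (∀ a : α, ∃ b ∈ B', (a, b) ∈ R1) ∧ n = B'.card}

theorem double_count {β γ : Type} [Fintype β] [Fintype γ] (CB : β → Finset γ) :
    ∑ b : β, (CB b).card =
      ∑ c : γ, (Finset.univ.filter fun b : β => c ∈ CB b).card := by
  classical
  simp only [Finset.card_eq_sum_ones]
  rw [Finset.sum_comm' (s := Finset.univ) (t := fun b => CB b)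
    (t' := Finset.univ) (s' := fun c => Finset.univ.filter fun b : β => c ∈ CB b)]
  intro b c
  simp

/-- Objective rewriting for the integral witness optimization:
for finite `A, B, C`, relation `R₁ ⊆ A × B` with every `a` incident to some
`b`, and an assignment `C_b ⊆ C` for each `b ∈ B` satisfying
`⋃_{b : (a,b) ∈ R₁} C_b = C` for all `a`, one has
`∑_b |C_b| = ∑_c |{b : c ∈ C_b}|`; and the minimum of `∑_b |C_b|` over all
feasible assignments equals `|C| · x*`. -/
theorem integral_objective_rewriting {α β γ : Type}
    [Fintype α] [Fintype β] [Fintype γ]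
    (R1 : Set (α × β)) (ha : ∀ a : α, ∃ b, (a, b) ∈ R1) :
    (∀ CB : β → Finset γ,
      (∀ (a : α) (c : γ), ∃ b, (a, b) ∈ R1 ∧ c ∈ CB b) →
      ∑ b : β, (CB b).card =
        ∑ c : γ, (Finset.univ.filter fun b : β => c ∈ CB b).card) ∧
    IsLeast {n | ∃ CB : β → Finset γ,
        (∀ (a : α) (c : γ), ∃ b, (a, b) ∈ R1 ∧ c ∈ CB b) ∧
        n = ∑ b : β, (CB b).card}
      (Fintype.card γ * coverNum R1) := by
  classical
  have hne : {n | ∃ B' : Finset β, (∀ a : α, ∃ b ∈ B', (a, b) ∈ R1) ∧ n = B'.card}.Nonempty := by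
    refine ⟨(Finset.univ : Finset β).card, Finset.univ, fun a => ?_, rfl⟩
    obtain ⟨b, hb⟩ := ha a
    exact ⟨b, Finset.mem_univ b, hb⟩
  obtain ⟨B', hB'cov, hB'card⟩ := Nat.sInf_mem hne
  refine ⟨fun CB _ => double_count CB, ?_, ?_⟩
  · -- membership: the witness assignment
    refine ⟨fun b => if b ∈ B' then Finset.univ else ∅, ?_, ?_⟩
    · intro a c
      obtain ⟨b, hbB', hab⟩ := hB'cov a
      exact ⟨b, hab, by simp [hbB']⟩
    · simp only [apply_ite Finset.card, Finset.card_univ, Finset.card_empty]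
      rw [Finset.sum_ite_mem, Finset.univ_inter, Finset.sum_const, smul_eq_mul,
        coverNum, hB'card, mul_comm]
  · -- lower bound
    rintro n ⟨CB, hfeas, rfl⟩
    rw [double_count CB]
    have : ∀ c : γ, coverNum R1 ≤ (Finset.univ.filter fun b : β => c ∈ CB b).card := by
      intro c
      apply Nat.sInf_le
      exact ⟨Finset.univ.filter fun b : β => c ∈ CB b,
        fun a => by obtain ⟨b, hab, hc⟩ := hfeas a c; exact ⟨b, by simp [hc], hab⟩, rfl⟩
    calc Fintype.card γ * coverNum R1 = ∑ _c : γ, coverNum R1 := by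
          simp [Finset.sum_const, mul_comm]
      _ ≤ _ := Finset.sum_le_sum fun c _ => this c
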